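/- Let M satisfy the Reset Cliff assumption and let (P̂_h)_{h=1}^H be admissible estimates. If π^{AIL} is any global minimizer of the VAIL objective L(π) = Σ_{h=1}^H Σ_{(s,a)} |P^π_h(s,a) − P̂_h(s,a)|, then L(π^{AIL}) = L(π^E), where π^E is the expert policy. -/

import Mathlib

open Finset

/-- State distribution `d^π_h` of a policy `π` in an episodic tabular MDP
(time steps are 0-indexed: `stateDist ρ P π 0 = ρ`). -/
noncomputable def stateDist {S A : Type*} [Fintype S] [Fintype A] (ρ : S → ℝ)
    (P : ℕ → S → A → S → ℝ) (π : ℕ → S → A → ℝ) : ℕ → S → ℝ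
  | 0 => ρ
  | h + 1 => fun s' => ∑ s : S, ∑ a : A, stateDist ρ P π h s * π h s a * P h s a s'

/-- State-action distribution `P^π_h(s,a) = d^π_h(s) π_h(a|s)`. -/
noncomputable def saDist {S A : Type*} [Fintype S] [Fintype A] (ρ : S → ℝ)
    (P : ℕ → S → A → S → ℝ) (π : ℕ → S → A → ℝ) (h : ℕ) (s : S) (a : A) : ℝ :=
  stateDist ρ P π h s * π h s a

/-- Policy value `V^π = Σ_{h<H} Σ_{(s,a)} P^π_h(s,a) r_h(s,a)`. -/
noncomputable def policyValue {S A : Type*} [Fintype S] [Fintype A] (ρ : S → ℝ)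
    (P : ℕ → S → A → S → ℝ) (π : ℕ → S → A → ℝ) (r : ℕ → S → A → ℝ) (H : ℕ) : ℝ :=
  ∑ h ∈ Finset.range H, ∑ s : S, ∑ a : A, saDist ρ P π h s a * r h s a

/-- `π` is a (Markovian, non-stationary) policy. -/
def IsPolicy {S A : Type*} [Fintype A] (π : ℕ → S → A → ℝ) : Prop :=
  ∀ h s, (∀ a, 0 ≤ π h s a) ∧ (∑ a : A, π h s a) = 1

/-- `P` is a transition function. -/
def IsTransition {S A : Type*} [Fintype S] (P : ℕ → S → A → S → ℝ) : Prop :=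
  ∀ h s a, (∀ s', 0 ≤ P h s a s') ∧ (∑ s' : S, P h s a s') = 1

/-- `ρ` is an initial state distribution. -/
def IsInitDist {S : Type*} [Fintype S] (ρ : S → ℝ) : Prop :=
  (∀ s, 0 ≤ ρ s) ∧ (∑ s : S, ρ s) = 1

/-- Rewards take values in `[0,1]`. -/
def IsReward {S A : Type*} (r : ℕ → S → A → ℝ) : Prop :=
  ∀ h s a, 0 ≤ r h s a ∧ r h s a ≤ 1

/-- The VAIL state-action distribution matching objective
`L(π) = Σ_{h<H} Σ_{(s,a)} |P^π_h(s,a) − Q_h(s,a)|`. -/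
noncomputable def vailLoss {S A : Type*} [Fintype S] [Fintype A] (ρ : S → ℝ)
    (P : ℕ → S → A → S → ℝ) (π : ℕ → S → A → ℝ) (Q : ℕ → S → A → ℝ) (H : ℕ) : ℝ :=
  ∑ h ∈ Finset.range H, ∑ s : S, ∑ a : A, |saDist ρ P π h s a - Q h s a|

/-- The Reset Cliff assumption: good states `G` (with bad states `Gᶜ`), expert action `a1`. -/
def ResetCliff {S A : Type*} [Fintype S] [Fintype A] [DecidableEq S]
    (ρ : S → ℝ) (P : ℕ → S → A → S → ℝ) (r : ℕ → S → A → ℝ)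
    (G : Finset S) (a1 : A) : Prop :=
  G.Nonempty ∧
  (∀ (h : ℕ), ∀ s ∈ G, r h s a1 = 1) ∧
  (∀ (h : ℕ) (s : S) (a : A), (s ∉ G ∨ a ≠ a1) → r h s a = 0) ∧
  (∀ (h : ℕ), ∀ s ∈ G, (∑ s' ∈ G, P h s a1 s') = 1) ∧
  (∀ (h : ℕ), ∀ s ∈ G, ∀ s' ∈ G, 0 < P h s a1 s') ∧
  (∀ (h : ℕ), ∀ s ∈ G, ∀ a : A, a ≠ a1 → (∑ s' ∈ Gᶜ, P h s a s') = 1) ∧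
  (∀ (h : ℕ), ∀ s ∉ G, ∀ a : A, (∑ s' ∈ Gᶜ, P h s a s') = 1) ∧
  (∀ s ∈ G, 0 < ρ s) ∧
  (∀ s ∉ G, ρ s = 0)

/-- Admissible estimates for the expert state-action distributions on a Reset Cliff instance. -/
def AdmissibleEst {S A : Type*} [Fintype S] [DecidableEq S]
    (G : Finset S) (a1 : A) (Q : ℕ → S → A → ℝ) (H : ℕ) : Prop :=
  ∀ h < H, (∀ s a, 0 ≤ Q h s a) ∧
    (∀ (s : S) (a : A), (s ∉ G ∨ a ≠ a1) → Q h s a = 0) ∧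
    (∑ s ∈ G, Q h s a1) = 1


section Aux

variable {S A : Type*} [Fintype S] [Fintype A]

lemma stateDist_nonneg' (ρ : S → ℝ) (P : ℕ → S → A → S → ℝ) (π : ℕ → S → A → ℝ)
    (hρ : ∀ s, 0 ≤ ρ s) (hP : IsTransition P) (hπ : IsPolicy π) :
    ∀ h s, 0 ≤ stateDist ρ P π h s := by
  intro h
  induction h with
  | zero => intro s; exact hρ s
  | succ h ih =>
    intro s'
    refine Finset.sum_nonneg fun s _ => Finset.sum_nonneg fun a _ => ?_
    exact mul_nonneg (mul_nonneg (ih s) ((hπ h s).1 a)) ((hP h s a).1 s')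

lemma stateDist_sum_one' (ρ : S → ℝ) (P : ℕ → S → A → S → ℝ) (π : ℕ → S → A → ℝ)
    (hρ : IsInitDist ρ) (hP : IsTransition P) (hπ : IsPolicy π) :
    ∀ h, ∑ s : S, stateDist ρ P π h s = 1 := by
  intro h
  induction h with
  | zero => exact hρ.2
  | succ h ih =>
    have key : ∀ s : S, ∑ s' : S, ∑ a : A, stateDist ρ P π h s * π h s a * P h s a s'
        = stateDist ρ P π h s := by
      intro s
      rw [Finset.sum_comm]
      have h1 : ∀ a : A, ∑ s' : S, stateDist ρ P π h s * π h s a * P h s a s'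
          = stateDist ρ P π h s * π h s a := by
        intro a; rw [← Finset.mul_sum, (hP h s a).2, mul_one]
      rw [Finset.sum_congr rfl fun a _ => h1 a, ← Finset.mul_sum, (hπ h s).2, mul_one]
    calc ∑ s' : S, stateDist ρ P π (h + 1) s'
        = ∑ s' : S, ∑ s : S, ∑ a : A, stateDist ρ P π h s * π h s a * P h s a s' := rfl
      _ = ∑ s : S, ∑ s' : S, ∑ a : A, stateDist ρ P π h s * π h s a * P h s a s' :=
          Finset.sum_comm
      _ = ∑ s : S, stateDist ρ P π h s := Finset.sum_congr rfl fun s _ => key s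
      _ = 1 := ih

end Aux

/-- on any Reset Cliff instance with admissible estimates, any global minimizer
`πAIL` of the VAIL objective attains the same objective value as the expert policy. -/
theorem vail_minimizer_loss_eq_expert_loss {S A : Type*} [Fintype S] [Fintype A]
    [Nonempty S] [Nonempty A] [DecidableEq S]
    (ρ : S → ℝ) (P : ℕ → S → A → S → ℝ) (r : ℕ → S → A → ℝ)
    (πE πAIL : ℕ → S → A → ℝ) (G : Finset S) (a1 : A)
    (Q : ℕ → S → A → ℝ) (H : ℕ) (hH : 1 ≤ H)
    (hρ : IsInitDist ρ) (hP : IsTransition P) (hr : IsReward r)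
    (hE : IsPolicy πE) (hAILpol : IsPolicy πAIL)
    (hRC : ResetCliff ρ P r G a1)
    (hEa : ∀ h s, πE h s a1 = 1)
    (hQ : AdmissibleEst G a1 Q H)
    (hmin : ∀ π, IsPolicy π → vailLoss ρ P πAIL Q H ≤ vailLoss ρ P π Q H) :
    vailLoss ρ P πAIL Q H = vailLoss ρ P πE Q H := by
  classical
  obtain ⟨hGne, hr1, hr0, hPG, hPpos, hPleak, hPbad, hρG, hρB⟩ := hRC
  -- non-expert transitions put no mass on good states
  have hPzero : ∀ (h : ℕ) (s : S) (a : A), (s ∉ G ∨ a ≠ a1) → ∀ s' ∈ G, P h s a s' = 0 := by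
    intro h s a hsa
    have hc : ∑ s' ∈ Gᶜ, P h s a s' = 1 := by
      rcases hsa with hs | ha
      · exact hPbad h s hs a
      · by_cases hs : s ∈ G
        · exact hPleak h s hs a ha
        · exact hPbad h s hs a
    have hG0 : ∑ s' ∈ G, P h s a s' = 0 := by
      have h2 := Finset.sum_add_sum_compl G (P h s a)
      rw [hc, (hP h s a).2] at h2; linarith
    intro s' hs'
    exact (Finset.sum_eq_zero_iff_of_nonneg fun x _ => (hP h s a).1 x).mp hG0 s' hs'
  -- recursion on good states
  have hrec : ∀ (π : ℕ → S → A → ℝ), IsPolicy π → ∀ (h : ℕ), ∀ s' ∈ G,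
      stateDist ρ P π (h + 1) s' = ∑ s ∈ G, stateDist ρ P π h s * π h s a1 * P h s a1 s' := by
    intro π hπ h s' hs'
    have step1 : stateDist ρ P π (h + 1) s'
        = ∑ s : S, ∑ a : A, stateDist ρ P π h s * π h s a * P h s a s' := rfl
    rw [step1, ← Finset.sum_subset (Finset.subset_univ G) (fun s _ hs =>
      Finset.sum_eq_zero fun a _ => by rw [hPzero h s a (Or.inl hs) s' hs', mul_zero])]
    refine Finset.sum_congr rfl fun s hs => ?_
    exact Finset.sum_eq_single a1
      (fun a _ hne => by rw [hPzero h s a (Or.inr hne) s' hs', mul_zero])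
      (fun hmem => absurd (Finset.mem_univ a1) hmem)
  -- expert plays only a1
  have hE0 : ∀ h s a, a ≠ a1 → πE h s a = 0 := by
    intro h s a hne
    have h1 := (hE h s).2
    have h3 := Finset.add_sum_erase Finset.univ (πE h s) (Finset.mem_univ a1)
    rw [hEa h s, h1] at h3
    have h4 : ∑ b ∈ Finset.univ.erase a1, πE h s b = 0 := by linarith
    exact (Finset.sum_eq_zero_iff_of_nonneg fun b _ => (hE h s).1 b).mp h4 a
      (Finset.mem_erase.mpr ⟨hne, Finset.mem_univ a⟩)
  have hEnn := stateDist_nonneg' ρ P πE hρ.1 hP hE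
  have hAnn := stateDist_nonneg' ρ P πAIL hρ.1 hP hAILpol
  -- expert stays on good states
  have hEGsum : ∀ h, ∑ s ∈ G, stateDist ρ P πE h s = 1 := by
    intro h
    induction h with
    | zero =>
      have h2 := Finset.sum_add_sum_compl G ρ
      have hc : ∑ s ∈ Gᶜ, ρ s = 0 :=
        Finset.sum_eq_zero fun s hs => hρB s (Finset.mem_compl.mp hs)
      rw [hc, hρ.2] at h2
      have : ∑ s ∈ G, stateDist ρ P πE 0 s = ∑ s ∈ G, ρ s :=
        Finset.sum_congr rfl fun s _ => rfl
      rw [this]; linarith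
    | succ h ih =>
      have h2 : ∑ s' ∈ G, stateDist ρ P πE (h + 1) s'
          = ∑ s' ∈ G, ∑ s ∈ G, stateDist ρ P πE h s * πE h s a1 * P h s a1 s' :=
        Finset.sum_congr rfl fun s' hs' => hrec πE hE h s' hs'
      rw [h2, Finset.sum_comm]
      calc ∑ s ∈ G, ∑ s' ∈ G, stateDist ρ P πE h s * πE h s a1 * P h s a1 s'
          = ∑ s ∈ G, stateDist ρ P πE h s := by
            refine Finset.sum_congr rfl fun s hs => ?_
            rw [← Finset.mul_sum, hPG h s hs, mul_one, hEa h s, mul_one]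
        _ = 1 := ih
  have hEuniv := stateDist_sum_one' ρ P πE hρ hP hE
  have hEzero : ∀ h, ∀ s ∉ G, stateDist ρ P πE h s = 0 := by
    intro h s hs
    have h2 := Finset.sum_add_sum_compl G (stateDist ρ P πE h)
    rw [hEGsum h, hEuniv h] at h2
    have h4 : ∑ s ∈ Gᶜ, stateDist ρ P πE h s = 0 := by linarith
    exact (Finset.sum_eq_zero_iff_of_nonneg fun x _ => hEnn h x).mp h4 s
      (Finset.mem_compl.mpr hs)
  have hple : ∀ h s, πAIL h s a1 ≤ 1 := by
    intro h s
    calc πAIL h s a1 ≤ ∑ a : A, πAIL h s a :=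
          Finset.single_le_sum (fun a _ => (hAILpol h s).1 a) (Finset.mem_univ a1)
      _ = 1 := (hAILpol h s).2
  -- domination on good states
  have hdom : ∀ h, ∀ s ∈ G, stateDist ρ P πAIL h s ≤ stateDist ρ P πE h s := by
    intro h
    induction h with
    | zero => intro s _; exact le_of_eq rfl
    | succ h ih =>
      intro s' hs'
      rw [hrec πAIL hAILpol h s' hs', hrec πE hE h s' hs']
      refine Finset.sum_le_sum fun s hs => ?_
      have h1 : stateDist ρ P πAIL h s * πAIL h s a1 ≤ stateDist ρ P πE h s :=
        (mul_le_of_le_one_right (hAnn h s) (hple h s)).trans (ih s hs)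
      rw [hEa h s, mul_one]
      exact mul_le_mul_of_nonneg_right h1 ((hP h s a1).1 s')
  -- per-step inequality
  have step : ∀ h ∈ Finset.range H,
      ∑ s : S, ∑ a : A, |saDist ρ P πE h s a - Q h s a|
        ≤ ∑ s : S, ∑ a : A, |saDist ρ P πAIL h s a - Q h s a| := by
    intro h hh
    obtain ⟨hQ0, hQsupp, hQsum⟩ := hQ h (Finset.mem_range.mp hh)
    set dE := stateDist ρ P πE h with hdE
    set dA := stateDist ρ P πAIL h with hdA
    set y : S → ℝ := fun s => dA s * πAIL h s a1 with hy
    have hynn : ∀ s, 0 ≤ y s := fun s => mul_nonneg (hAnn h s) ((hAILpol h s).1 a1)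
    have hyle : ∀ s ∈ G, y s ≤ dE s := fun s hs =>
      (mul_le_of_le_one_right (hAnn h s) (hple h s)).trans (hdom h s hs)
    -- closed form for expert side
    have hL : ∑ s : S, ∑ a : A, |saDist ρ P πE h s a - Q h s a|
        = ∑ s ∈ G, |dE s - Q h s a1| := by
      have hLinner : ∀ s : S, ∑ a : A, |saDist ρ P πE h s a - Q h s a|
          = |dE s - Q h s a1| := by
        intro s
        have e1 : ∑ a : A, |saDist ρ P πE h s a - Q h s a|
            = |saDist ρ P πE h s a1 - Q h s a1| :=
          Finset.sum_eq_single a1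
            (fun a _ hne => by
              rw [hQsupp s a (Or.inr hne)]
              simp [saDist, hE0 h s a hne])
            (fun hm => absurd (Finset.mem_univ a1) hm)
        rw [e1, saDist, hEa h s, mul_one]
      rw [Finset.sum_congr rfl fun s _ => hLinner s]
      refine (Finset.sum_subset (Finset.subset_univ G) fun s _ hs => ?_).symm
      rw [hdE, hEzero h s hs, hQsupp s a1 (Or.inl hs), sub_zero, abs_zero]
    -- closed form for learner side
    have hRinner : ∀ s : S, ∑ a : A, |saDist ρ P πAIL h s a - Q h s a|
        = |y s - Q h s a1| + (dA s - y s) := by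
      intro s
      have e1 := Finset.add_sum_erase Finset.univ
        (fun a => |saDist ρ P πAIL h s a - Q h s a|) (Finset.mem_univ a1)
      have e2 : ∑ a ∈ Finset.univ.erase a1, |saDist ρ P πAIL h s a - Q h s a|
          = ∑ a ∈ Finset.univ.erase a1, dA s * πAIL h s a := by
        refine Finset.sum_congr rfl fun a ha => ?_
        obtain ⟨hne, -⟩ := Finset.mem_erase.mp ha
        rw [hQsupp s a (Or.inr hne), sub_zero, saDist,
          abs_of_nonneg (mul_nonneg (hAnn h s) ((hAILpol h s).1 a))]
      have e3 : ∑ a ∈ Finset.univ.erase a1, dA s * πAIL h s a = dA s - y s := by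
        have h3 := Finset.add_sum_erase Finset.univ (πAIL h s) (Finset.mem_univ a1)
        rw [(hAILpol h s).2] at h3
        have h4 : ∑ a ∈ Finset.univ.erase a1, πAIL h s a = 1 - πAIL h s a1 := by
          linarith
        rw [← Finset.mul_sum, h4]
        simp only [hy]
        ring
      have e4 : (fun a => |saDist ρ P πAIL h s a - Q h s a|) a1 = |y s - Q h s a1| := by
        simp only [saDist, ← hdA, hy]
      rw [← e1, e2, e3]; exact congrArg (· + (dA s - y s)) e4
    have hRform : ∑ s : S, ∑ a : A, |saDist ρ P πAIL h s a - Q h s a|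
        = ∑ s : S, (|y s - Q h s a1| + (dA s - y s)) :=
      Finset.sum_congr rfl fun s _ => hRinner s
    rw [hL, hRform]
    -- pointwise bound on good states
    have hpt : ∀ s ∈ G, |dE s - Q h s a1| ≤ |y s - Q h s a1| + (dE s - y s) := by
      intro s hs
      have h1 : |dE s - Q h s a1| = |(y s - Q h s a1) + (dE s - y s)| := by
        congr 1; ring
      rw [h1]
      calc |(y s - Q h s a1) + (dE s - y s)|
          ≤ |y s - Q h s a1| + |dE s - y s| := abs_add_le _ _
        _ = |y s - Q h s a1| + (dE s - y s) := by
            rw [abs_of_nonneg (sub_nonneg.mpr (hyle s hs))]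
    refine (Finset.sum_le_sum hpt).trans (le_of_eq ?_)
    -- accounting
    have hs1 := Finset.sum_add_sum_compl G (fun s => |y s - Q h s a1|)
    have hs2 := Finset.sum_add_sum_compl G y
    have hs3 := Finset.sum_add_sum_compl G dA
    have hc1 : ∑ s ∈ Gᶜ, |y s - Q h s a1| = ∑ s ∈ Gᶜ, y s := by
      refine Finset.sum_congr rfl fun s hs => ?_
      rw [hQsupp s a1 (Or.inl (Finset.mem_compl.mp hs)), sub_zero,
        abs_of_nonneg (hynn s)]
    have hdAuniv : ∑ s : S, dA s = 1 := stateDist_sum_one' ρ P πAIL hρ hP hAILpol h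
    have hdEG : ∑ s ∈ G, dE s = 1 := hEGsum h
    rw [Finset.sum_add_distrib, Finset.sum_add_distrib,
      Finset.sum_sub_distrib, Finset.sum_sub_distrib, hdEG]
    linarith [hs1, hs2, hs3, hc1, hdAuniv]
  have hle : vailLoss ρ P πE Q H ≤ vailLoss ρ P πAIL Q H := Finset.sum_le_sum step
  exact le_antisymm (hmin πE hE) hle
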